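/- Let p, J ≥ 1, let Γ be a J×J symmetric positive definite real matrix, and let C be a (p+J)×(p+J) symmetric positive definite real matrix with block decomposition C = [[C^{θθ}, C^{θG}], [(C^{θG})ᵀ, C^{GG}]] where C^{θθ} is p×p and C^{GG} is J×J. Let H = [0 I_J] (the J×(p+J) matrix projecting onto the last J coordinates) and H^⊥ = [I_p 0]. For ψ = (ψ_θ, ψ_G) ∈ ℝ^{p+J} and y ∈ ℝ^J, consider the strictly convex objective J(v) = (1/2)(y − Hv)ᵀ Γ⁻¹ (y − Hv) + (1/2)(v − ψ)ᵀ C⁻¹ (v − ψ). Then J has a unique minimizer v* over ℝ^{p+J}, and its θ-component is given by the Kalman update formula H^⊥ v* = ψ_θ + C^{θG} (C^{GG} + Γ)⁻¹ (y − ψ_G). -/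

import Mathlib

open Matrix

lemma sym_dot {n : Type*} [Fintype n] (A : Matrix n n ℝ) (hA : Aᵀ = A) (x y : n → ℝ) :
    x ⬝ᵥ (A *ᵥ y) = y ⬝ᵥ (A *ᵥ x) := by
  rw [dotProduct_mulVec, ← mulVec_transpose, hA, dotProduct_comm]

lemma herm_transpose {n : Type*} (A : Matrix n n ℝ) (hA : A.IsHermitian) : Aᵀ = A := by
  ext i j
  have := congrFun (congrFun hA i) j
  simpa using this

lemma expand_bilin {n : Type*} [Fintype n] (A : Matrix n n ℝ) (hA : Aᵀ = A) (x d : n → ℝ) :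
    (x + d) ⬝ᵥ (A *ᵥ (x + d)) = x ⬝ᵥ (A *ᵥ x) + 2 * (d ⬝ᵥ (A *ᵥ x)) + d ⬝ᵥ (A *ᵥ d) := by
  have h : x ⬝ᵥ (A *ᵥ d) = d ⬝ᵥ (A *ᵥ x) := sym_dot A hA x d
  simp only [mulVec_add, dotProduct_add, add_dotProduct, h]
  ring

lemma mulVec_elim_inl {α β : Type*} [Fintype α] [Fintype β]
    (C : Matrix (α ⊕ β) (α ⊕ β) ℝ) (u : β → ℝ) (i : α) :
    (C *ᵥ Sum.elim (0 : α → ℝ) u) (Sum.inl i) = (C.toBlocks₁₂ *ᵥ u) i := by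
  simp [mulVec, dotProduct, Fintype.sum_sum_type, toBlocks₁₂]

lemma mulVec_elim_inr {α β : Type*} [Fintype α] [Fintype β]
    (C : Matrix (α ⊕ β) (α ⊕ β) ℝ) (u : β → ℝ) (j : β) :
    (C *ᵥ Sum.elim (0 : α → ℝ) u) (Sum.inr j) = (C.toBlocks₂₂ *ᵥ u) j := by
  simp [mulVec, dotProduct, Fintype.sum_sum_type, toBlocks₂₂]

lemma dot_elim_zero {α β : Type*} [Fintype α] [Fintype β] (d : α ⊕ β → ℝ) (z : β → ℝ) :
    d ⬝ᵥ Sum.elim (0 : α → ℝ) z = (fun j => d (Sum.inr j)) ⬝ᵥ z := by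
  rw [← Sum.elim_comp_inl_inr d, sumElim_dotProduct_sumElim]
  simp
  rfl

lemma elim_zero_dot {α β : Type*} [Fintype α] [Fintype β] (x : β → ℝ) (z : α ⊕ β → ℝ) :
    Sum.elim (0 : α → ℝ) x ⬝ᵥ z = x ⬝ᵥ (fun j => z (Sum.inr j)) := by
  rw [← Sum.elim_comp_inl_inr z, sumElim_dotProduct_sumElim]
  simp
  rfl

lemma posdef_block22 {α β : Type*} [Fintype α] [Fintype β] [DecidableEq α] [DecidableEq β]
    (C : Matrix (α ⊕ β) (α ⊕ β) ℝ) (hC : C.PosDef) : C.toBlocks₂₂.PosDef := by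
  refine posDef_iff_dotProduct_mulVec.mpr ⟨?_, ?_⟩
  · ext i j
    have := congrFun (congrFun hC.1 (Sum.inr i)) (Sum.inr j)
    simpa [toBlocks₂₂] using this
  · intro x hx
    have hx' : Sum.elim (0 : α → ℝ) x ≠ 0 := by
      intro h
      apply hx
      ext j
      exact congrFun h (Sum.inr j)
    have h := hC.dotProduct_mulVec_pos (x := Sum.elim 0 x) hx'
    have heq : star (Sum.elim (0 : α → ℝ) x) ⬝ᵥ (C *ᵥ Sum.elim 0 x)
        = star x ⬝ᵥ (C.toBlocks₂₂ *ᵥ x) := by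
      simp only [star_trivial]
      rw [elim_zero_dot]
      congr 1
      funext j
      exact mulVec_elim_inr C x j
    rwa [heq] at h

lemma posdef_dot_pos {n : Type*} [Fintype n] {A : Matrix n n ℝ} (hA : A.PosDef)
    {x : n → ℝ} (hx : x ≠ 0) : 0 < x ⬝ᵥ (A *ᵥ x) := by
  have := hA.dotProduct_mulVec_pos hx
  simpa using this

lemma posdef_dot_nonneg {n : Type*} [Fintype n] {A : Matrix n n ℝ} (hA : A.PosDef)
    (x : n → ℝ) : 0 ≤ x ⬝ᵥ (A *ᵥ x) := by
  rcases eq_or_ne x 0 with h | h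
  · simp [h]
  · exact le_of_lt (posdef_dot_pos hA h)


/-- The EKI quadratic objective
`J(v) = ½ (y − Hv)ᵀ Γ⁻¹ (y − Hv) + ½ (v − ψ)ᵀ C⁻¹ (v − ψ)`, where
`H` projects onto the last `J` coordinates. -/
noncomputable def ekiObjective (p J : ℕ) (Γ : Matrix (Fin J) (Fin J) ℝ)
    (C : Matrix (Fin p ⊕ Fin J) (Fin p ⊕ Fin J) ℝ)
    (ψ : Fin p ⊕ Fin J → ℝ) (y : Fin J → ℝ)
    (v : Fin p ⊕ Fin J → ℝ) : ℝ :=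
  (1 / 2) * ((fun j => y j - v (Sum.inr j)) ⬝ᵥ
      (Γ⁻¹ *ᵥ fun j => y j - v (Sum.inr j)))
    + (1 / 2) * ((v - ψ) ⬝ᵥ (C⁻¹ *ᵥ (v - ψ)))

/-- The EKI objective has a unique minimizer, whose `θ`-component is given by
the Kalman update formula
`H^⊥ v* = ψ_θ + C^{θG} (C^{GG} + Γ)⁻¹ (y − ψ_G)`. -/
theorem eki_minimizer_kalman_update (p J : ℕ) (hp : 1 ≤ p) (hJ : 1 ≤ J)
    (Γ : Matrix (Fin J) (Fin J) ℝ) (hΓ : Γ.PosDef)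
    (C : Matrix (Fin p ⊕ Fin J) (Fin p ⊕ Fin J) ℝ) (hC : C.PosDef)
    (ψ : Fin p ⊕ Fin J → ℝ) (y : Fin J → ℝ) :
    (∃! v : Fin p ⊕ Fin J → ℝ,
        ∀ w : Fin p ⊕ Fin J → ℝ,
          ekiObjective p J Γ C ψ y v ≤ ekiObjective p J Γ C ψ y w) ∧
      ∀ v : Fin p ⊕ Fin J → ℝ,
        (∀ w : Fin p ⊕ Fin J → ℝ,
          ekiObjective p J Γ C ψ y v ≤ ekiObjective p J Γ C ψ y w) →
        (fun i => v (Sum.inl i)) =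
          (fun i => ψ (Sum.inl i)) +
            C.toBlocks₁₂ *ᵥ ((C.toBlocks₂₂ + Γ)⁻¹ *ᵥ
              fun j => y j - ψ (Sum.inr j)) := by
  have hΓi : (Γ⁻¹).PosDef := hΓ.inv
  have hCi : (C⁻¹).PosDef := hC.inv
  have hΓiT : (Γ⁻¹)ᵀ = Γ⁻¹ := herm_transpose _ hΓi.1
  have hCiT : (C⁻¹)ᵀ = C⁻¹ := herm_transpose _ hCi.1
  have hC22 : C.toBlocks₂₂.PosDef := posdef_block22 C hC
  set S : Matrix (Fin J) (Fin J) ℝ := C.toBlocks₂₂ + Γ with hSdef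
  have hS : S.PosDef := hC22.add hΓ
  set r : Fin J → ℝ := fun j => y j - ψ (Sum.inr j) with hrdef
  set u : Fin J → ℝ := S⁻¹ *ᵥ r with hudef
  set e : Fin p ⊕ Fin J → ℝ := Sum.elim 0 u with hedef
  set vs : Fin p ⊕ Fin J → ℝ := ψ + C *ᵥ e with hvsdef
  -- (S) u = r
  have hSu : S *ᵥ u = r := by
    rw [hudef, mulVec_mulVec, mul_nonsing_inv _ (isUnit_iff_ne_zero.mpr hS.det_pos.ne'),
      one_mulVec]
  -- C⁻¹ (vs - ψ) = e
  have hvsψ : vs - ψ = C *ᵥ e := by rw [hvsdef]; abel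
  have hCiCe : C⁻¹ *ᵥ (vs - ψ) = e := by
    rw [hvsψ, mulVec_mulVec, nonsing_inv_mul _ (isUnit_iff_ne_zero.mpr hC.det_pos.ne'),
      one_mulVec]
  -- residual at vs
  have hres : (fun j => y j - vs (Sum.inr j)) = Γ *ᵥ u := by
    funext j
    have h1 : vs (Sum.inr j) = ψ (Sum.inr j) + (C.toBlocks₂₂ *ᵥ u) j := by
      rw [hvsdef]
      simp only [Pi.add_apply]
      rw [hedef, mulVec_elim_inr]
    have h3 := congrFun hSu j
    have h2 : (S *ᵥ u) j = (C.toBlocks₂₂ *ᵥ u) j + (Γ *ᵥ u) j := by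
      rw [hSdef, add_mulVec]; rfl
    rw [h2] at h3
    have h4 : r j = y j - ψ (Sum.inr j) := rfl
    rw [h4] at h3
    rw [h1]
    linarith
  -- stationarity
  have hstat : C⁻¹ *ᵥ (vs - ψ)
      = Sum.elim (0 : Fin p → ℝ) (Γ⁻¹ *ᵥ (fun j => y j - vs (Sum.inr j))) := by
    rw [hCiCe, hres, mulVec_mulVec,
      nonsing_inv_mul _ (isUnit_iff_ne_zero.mpr hΓ.det_pos.ne'), one_mulVec, hedef]
  -- key identity
  have key : ∀ w : Fin p ⊕ Fin J → ℝ,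
      ekiObjective p J Γ C ψ y w = ekiObjective p J Γ C ψ y vs
        + (1 / 2) * ((fun j => (w - vs) (Sum.inr j)) ⬝ᵥ
            (Γ⁻¹ *ᵥ (fun j => (w - vs) (Sum.inr j))))
        + (1 / 2) * ((w - vs) ⬝ᵥ (C⁻¹ *ᵥ (w - vs))) := by
    intro w
    set d : Fin p ⊕ Fin J → ℝ := w - vs with hddef
    set g : Fin J → ℝ := fun j => d (Sum.inr j) with hgdef
    set a : Fin J → ℝ := fun j => y j - vs (Sum.inr j) with hadef
    have hw1 : (fun j => y j - w (Sum.inr j)) = a + (-g) := by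
      funext j
      simp only [Pi.add_apply, Pi.neg_apply, hadef, hgdef, hddef, Pi.sub_apply]
      ring
    have hw2 : w - ψ = (vs - ψ) + d := by rw [hddef]; abel
    have e1 : (a + (-g)) ⬝ᵥ (Γ⁻¹ *ᵥ (a + (-g)))
        = a ⬝ᵥ (Γ⁻¹ *ᵥ a) + 2 * ((-g) ⬝ᵥ (Γ⁻¹ *ᵥ a)) + (-g) ⬝ᵥ (Γ⁻¹ *ᵥ (-g)) :=
      expand_bilin _ hΓiT a (-g)
    have e2 : ((vs - ψ) + d) ⬝ᵥ (C⁻¹ *ᵥ ((vs - ψ) + d))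
        = (vs - ψ) ⬝ᵥ (C⁻¹ *ᵥ (vs - ψ)) + 2 * (d ⬝ᵥ (C⁻¹ *ᵥ (vs - ψ)))
          + d ⬝ᵥ (C⁻¹ *ᵥ d) :=
      expand_bilin _ hCiT (vs - ψ) d
    have hcross : d ⬝ᵥ (C⁻¹ *ᵥ (vs - ψ)) = g ⬝ᵥ (Γ⁻¹ *ᵥ a) := by
      rw [hstat, dot_elim_zero]
    have hneg : (-g) ⬝ᵥ (Γ⁻¹ *ᵥ (-g)) = g ⬝ᵥ (Γ⁻¹ *ᵥ g) := by
      rw [mulVec_neg, neg_dotProduct, dotProduct_neg, neg_neg]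
    have hneg2 : (-g) ⬝ᵥ (Γ⁻¹ *ᵥ a) = -(g ⬝ᵥ (Γ⁻¹ *ᵥ a)) := by
      rw [neg_dotProduct]
    unfold ekiObjective
    rw [hw1, hw2, e1, e2, hneg, hneg2, hcross]
    ring
  -- minimality
  have hmin : ∀ w, ekiObjective p J Γ C ψ y vs ≤ ekiObjective p J Γ C ψ y w := by
    intro w
    rw [key w]
    have h1 := posdef_dot_nonneg hΓi (fun j => (w - vs) (Sum.inr j))
    have h2 := posdef_dot_nonneg hCi (w - vs)
    linarith
  -- uniqueness of minimizer
  have huniq : ∀ v : Fin p ⊕ Fin J → ℝ,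
      (∀ w, ekiObjective p J Γ C ψ y v ≤ ekiObjective p J Γ C ψ y w) → v = vs := by
    intro v hv
    by_contra hne
    have hd : v - vs ≠ 0 := sub_ne_zero.mpr hne
    have h1 := posdef_dot_nonneg hΓi (fun j => (v - vs) (Sum.inr j))
    have h2 := posdef_dot_pos hCi hd
    have h3 := hv vs
    rw [key v] at h3
    linarith
  refine ⟨⟨vs, hmin, huniq⟩, ?_⟩
  intro v hv
  have hveq := huniq v hv
  subst hveq
  funext i
  simp only [Pi.add_apply]
  rw [hvsdef]
  simp only [Pi.add_apply]
  rw [hedef, mulVec_elim_inl]
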